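/- For all n ≥ 1 and 0 ≤ k ≤ n-1, the number CT(n,k) of partitions of [n] with k arcs avoiding right crossings equals the number S(n,k) of admissible integer sequences of length n with n-k left-to-right maxima. -/

import Mathlib

open Finset

/-- A partial matching of `[m]`: a set of arcs `(i,j)` with `1 ≤ i < j ≤ m`
such that every vertex belongs to at most one arc. -/
def IsMatching (m : ℕ) (M : Finset (ℕ × ℕ)) : Prop :=
  (∀ p ∈ M, 1 ≤ p.1 ∧ p.1 < p.2 ∧ p.2 ≤ m) ∧
  ∀ p ∈ M, ∀ q ∈ M, p ≠ q → p.1 ≠ q.1 ∧ p.1 ≠ q.2 ∧ p.2 ≠ q.1 ∧ p.2 ≠ q.2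

/-- The linear (arc) diagram of a partition of `[n]`: every vertex is the left
endpoint of at most one arc and the right endpoint of at most one arc. -/
def IsPartitionDiagram (n : ℕ) (P : Finset (ℕ × ℕ)) : Prop :=
  (∀ p ∈ P, 1 ≤ p.1 ∧ p.1 < p.2 ∧ p.2 ≤ n) ∧
  ∀ p ∈ P, ∀ q ∈ P, p ≠ q → p.1 ≠ q.1 ∧ p.2 ≠ q.2

/-- A 2-right crossing: arcs `(i1,j1)`, `(i2,j2)` with `i1<i2<j1<j2` and `j2-j1 ≤ 2`. -/
def Has2RightCrossing (M : Finset (ℕ × ℕ)) : Prop :=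
  ∃ p ∈ M, ∃ q ∈ M, p.1 < q.1 ∧ q.1 < p.2 ∧ p.2 < q.2 ∧ q.2 ≤ p.2 + 2

/-- A right crossing: arcs `(i1,j1)`, `(i2,j2)` with `i1<i2<j1<j2` and `j2 = j1+1`. -/
def HasRightCrossing (M : Finset (ℕ × ℕ)) : Prop :=
  ∃ p ∈ M, ∃ q ∈ M, p.1 < q.1 ∧ q.1 < p.2 ∧ p.2 < q.2 ∧ q.2 = p.2 + 1

/-- A right nesting: arcs `(i1,j1)`, `(i2,j2)` with `i1<i2<j2<j1` and `j1 = j2+1`. -/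
def HasRightNesting (M : Finset (ℕ × ℕ)) : Prop :=
  ∃ p ∈ M, ∃ q ∈ M, p.1 < q.1 ∧ q.1 < q.2 ∧ q.2 < p.2 ∧ p.2 = q.2 + 1

/-- `P(m,k)`: partial matchings of `[m]` with `k` arcs avoiding 2-right crossings
and right nestings. -/
def PMSet (m k : ℕ) : Set (Finset (ℕ × ℕ)) :=
  {M | IsMatching m M ∧ M.card = k ∧ ¬ Has2RightCrossing M ∧ ¬ HasRightNesting M}

/-- `CT(n,k)`: partitions of `[n]` with `k` arcs avoiding right crossings. -/
def CTSet (n k : ℕ) : Set (Finset (ℕ × ℕ)) :=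
  {P | IsPartitionDiagram n P ∧ P.card = k ∧ ¬ HasRightCrossing P}

/-- `lmax x i = max(x_0, …, x_{i-1})` (with value `0` when `i = 0`). -/
def lmax (x : ℕ → ℕ) (i : ℕ) : ℕ := (Finset.range i).sup x

/-- `x_i` is a left-to-right maximum (with `x_0` always counted as one). -/
def IsLTRMax (x : ℕ → ℕ) (i : ℕ) : Prop := i = 0 ∨ lmax x i < x i

/-- `S(n,k)`: sequences `x_0 … x_{n-1}` (extended by `0`) with `x_0 = 0`,
`0 ≤ x_i ≤ max(x_0…x_{i-1})+1`, `x_i < x_{i-1}` whenever `x_i < max(x_0…x_{i-1})`,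
and exactly `n-k` left-to-right maxima. -/
def SeqSet (n k : ℕ) : Set (ℕ → ℕ) :=
  {x | (∀ i, n ≤ i → x i = 0) ∧ x 0 = 0 ∧
       (∀ i, 1 ≤ i → i < n → x i ≤ lmax x i + 1) ∧
       (∀ i, 1 ≤ i → i < n → x i < lmax x i → x i < x (i - 1)) ∧
       ((Finset.range n).filter (fun i => i = 0 ∨ lmax x i < x i)).card = n - k}

/-- rank of `b` in finset `S`: number of elements of `S` below `b`. -/
def rk (S : Finset ℕ) (b : ℕ) : ℕ := (S.filter (· < b)).card

noncomputable def fnth (S : Finset ℕ) (r : ℕ) : ℕ := Nat.nth (· ∈ S) r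

lemma finite_mem (S : Finset ℕ) : (setOf (· ∈ S)).Finite := S.finite_toSet

lemma toFinset_mem (S : Finset ℕ) : (finite_mem S).toFinset = S := by
  ext v; simp [Set.Finite.mem_toFinset]; exact Iff.rfl

lemma rk_eq_count (S : Finset ℕ) (b : ℕ) : rk S b = Nat.count (· ∈ S) b := by
  rw [Nat.count_eq_card_filter_range, rk]
  congr 1
  ext v
  simp only [mem_filter, Finset.mem_range]
  tauto

lemma fnth_mem {S : Finset ℕ} {r : ℕ} (h : r < S.card) : fnth S r ∈ S := by
  have := Nat.nth_mem_of_lt_card (finite_mem S) (by convert h; ext v; simp)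
  exact this

lemma rk_fnth {S : Finset ℕ} {r : ℕ} (h : r < S.card) : rk S (fnth S r) = r := by
  rw [rk_eq_count]
  exact Nat.count_nth_of_lt_card_finite (finite_mem S) (by convert h; ext v; simp)

lemma fnth_rk {S : Finset ℕ} {b : ℕ} (hb : b ∈ S) : fnth S (rk S b) = b := by
  rw [rk_eq_count]
  exact Nat.nth_count hb

lemma rk_lt_card {S : Finset ℕ} {b : ℕ} (hb : b ∈ S) : rk S b < S.card := by
  have hsub : S.filter (· < b) ⊆ S.erase b := by
    intro v hv
    rw [Finset.mem_erase]
    simp only [mem_filter] at hv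
    exact ⟨Nat.ne_of_lt hv.2, hv.1⟩
  calc rk S b ≤ (S.erase b).card := Finset.card_le_card hsub
    _ < S.card := Finset.card_erase_lt_of_mem hb

lemma rk_lt_rk {S : Finset ℕ} {a b : ℕ} (hb : b ∈ S) (hab : b < a) : rk S b < rk S a := by
  apply Finset.card_lt_card
  constructor
  · intro v hv
    simp only [mem_filter] at hv ⊢
    exact ⟨hv.1, lt_trans hv.2 hab⟩
  · intro hcon
    have := hcon (Finset.mem_filter.2 ⟨hb, hab⟩)
    simp only [mem_filter] at this
    exact lt_irrefl b this.2

lemma rk_inj {S : Finset ℕ} {a b : ℕ} (ha : a ∈ S) (hb : b ∈ S) (h : rk S a = rk S b) :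
    a = b := by
  rw [← fnth_rk ha, ← fnth_rk hb, h]

lemma rk_eq_card_of_forall_lt {S : Finset ℕ} {t : ℕ} (h : ∀ v ∈ S, v < t) :
    rk S t = S.card := by
  unfold rk
  rw [Finset.filter_true_of_mem h]

lemma rk_top {S : Finset ℕ} {t : ℕ} (ht : t ∈ S) (h : ∀ v ∈ S, v ≤ t) :
    rk S t + 1 = S.card := by
  have : S.filter (· < t) = S.erase t := by
    ext v
    simp only [mem_filter, Finset.mem_erase]
    constructor
    · rintro ⟨h1, h2⟩; exact ⟨Nat.ne_of_lt h2, h1⟩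
    · rintro ⟨h1, h2⟩; exact ⟨h2, lt_of_le_of_ne (h v h2) h1⟩
  rw [rk, this, Finset.card_erase_of_mem ht]
  have := Finset.card_pos.2 ⟨t, ht⟩
  omega

/-- vertices in `[1,t)` that are not left endpoints of an arc ending before `t`. -/
def UU (P : Finset (ℕ × ℕ)) (t : ℕ) : Finset ℕ :=
  (Finset.Ico 1 t).filter (fun v => ∀ p ∈ P, p.1 = v → t ≤ p.2)

noncomputable def openerAt (P : Finset (ℕ × ℕ)) (t : ℕ) : ℕ :=
  if h : ∃ p ∈ P, p.2 = t then h.choose.1 else t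

def rk' := 0

lemma mem_UU {P : Finset (ℕ × ℕ)} {t v : ℕ} :
    v ∈ UU P t ↔ (1 ≤ v ∧ v < t) ∧ ∀ p ∈ P, p.1 = v → t ≤ p.2 := by
  simp [UU, Finset.mem_Ico]

lemma UU_one (P : Finset (ℕ × ℕ)) : UU P 1 = ∅ := by
  simp [UU]

lemma not_mem_UU_self (P : Finset (ℕ × ℕ)) (t : ℕ) : t ∉ UU P t := by
  intro h
  exact absurd (mem_UU.1 h).1.2 (lt_irrefl t)

lemma UU_subset_lt {P : Finset (ℕ × ℕ)} {t : ℕ} : ∀ v ∈ UU P t, v < t :=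
  fun v hv => (mem_UU.1 hv).1.2

section diagram
variable {n : ℕ} {P : Finset (ℕ × ℕ)}
  (hP1 : ∀ p ∈ P, 1 ≤ p.1 ∧ p.1 < p.2 ∧ p.2 ≤ n)
  (hP2 : ∀ p ∈ P, ∀ q ∈ P, p ≠ q → p.1 ≠ q.1 ∧ p.2 ≠ q.2)

include hP2 in
lemma rend_unique' {q : ℕ × ℕ} {b t : ℕ} (hq : q ∈ P) (hq2 : q.2 = t) (hb : (b, t) ∈ P) :
    q.1 = b := by
  by_contra hne
  have hpq : q ≠ (b, t) := fun h => hne (by rw [h])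
  exact (hP2 _ hq _ hb hpq).2 (by rw [hq2])

include hP2 in
lemma rend_unique {b c t : ℕ} (hb : (b, t) ∈ P) (hc : (c, t) ∈ P) : b = c :=
  rend_unique' hP2 hb rfl hc

include hP2 in
lemma lend_unique {b s t : ℕ} (hb : (b, s) ∈ P) (hc : (b, t) ∈ P) : s = t := by
  by_contra hne
  have hpq : ((b, s) : ℕ × ℕ) ≠ (b, t) := by simp [hne]
  exact (hP2 _ hb _ hc hpq).1 rfl

include hP2 in
lemma openerAt_eq {b t : ℕ} (hb : (b, t) ∈ P) : openerAt P t = b := by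
  have h : ∃ p ∈ P, p.2 = t := ⟨(b, t), hb, rfl⟩
  rw [openerAt, dif_pos h]
  obtain ⟨hmem, h2⟩ := h.choose_spec
  exact rend_unique' hP2 hmem h2 hb

lemma openerAt_eq_self {t : ℕ} (h : ∀ p ∈ P, p.2 ≠ t) : openerAt P t = t := by
  rw [openerAt, dif_neg]
  rintro ⟨p, hp, h2⟩
  exact h p hp h2

include hP1 hP2 in
lemma opener_mem_UU {b t : ℕ} (hb : (b, t) ∈ P) : b ∈ UU P t := by
  obtain ⟨h1, h2, _⟩ := hP1 _ hb
  refine mem_UU.2 ⟨⟨h1, h2⟩, ?_⟩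
  intro p hp hp1
  have : p = (b, p.2) := by rw [← hp1]
  rw [this] at hp
  have := lend_unique hP2 hb hp
  omega

include hP1 in
lemma UU_succ_nrend {t : ℕ} (ht : 1 ≤ t) (h : ∀ p ∈ P, p.2 ≠ t) :
    UU P (t + 1) = insert t (UU P t) := by
  ext v
  simp only [mem_UU, Finset.mem_insert]
  constructor
  · rintro ⟨⟨h1, h2⟩, h3⟩
    rcases Nat.lt_succ_iff_lt_or_eq.1 h2 with h2' | h2'
    · right; refine ⟨⟨h1, h2'⟩, fun p hp hp1 => ?_⟩
      have := h3 p hp hp1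
      omega
    · left; exact h2'
  · rintro (rfl | ⟨⟨h1, h2⟩, h3⟩)
    · refine ⟨⟨ht, Nat.lt_succ_self v⟩, fun p hp hp1 => ?_⟩
      have := (hP1 p hp).2.1
      omega
    · refine ⟨⟨h1, by omega⟩, fun p hp hp1 => ?_⟩
      have h4 := h3 p hp hp1
      have h5 := h p hp
      omega

include hP1 hP2 in
lemma UU_succ_rend {b t : ℕ} (hb : (b, t) ∈ P) :
    UU P (t + 1) = insert t ((UU P t).erase b) := by
  have hbt := (hP1 _ hb).2.1
  have hb1 := (hP1 _ hb).1
  ext v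
  simp only [mem_UU, Finset.mem_insert, Finset.mem_erase]
  constructor
  · rintro ⟨⟨h1, h2⟩, h3⟩
    rcases Nat.lt_succ_iff_lt_or_eq.1 h2 with h2' | h2'
    · right
      refine ⟨?_, ⟨h1, h2'⟩, fun p hp hp1 => ?_⟩
      · rintro rfl
        have := h3 _ hb rfl
        omega
      · have h4 := h3 p hp hp1
        omega
    · left; exact h2'
  · rintro (rfl | ⟨hne, ⟨h1, h2⟩, h3⟩)
    · refine ⟨⟨by omega, Nat.lt_succ_self v⟩, fun p hp hp1 => ?_⟩
      have := (hP1 p hp).2.1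
      omega
    · refine ⟨⟨h1, by omega⟩, fun p hp hp1 => ?_⟩
      have h4 := h3 p hp hp1
      rcases Nat.eq_or_lt_of_le h4 with h5 | h5
      · exfalso
        have := rend_unique' hP2 hp h5.symm hb
        rw [hp1] at this
        exact hne this
      · omega

include hP1 hP2 in
lemma card_UU_succ_rend {b t : ℕ} (hb : (b, t) ∈ P) :
    (UU P (t + 1)).card = (UU P t).card := by
  rw [UU_succ_rend hP1 hP2 hb]
  rw [Finset.card_insert_of_notMem (fun h => (not_mem_UU_self P t) (Finset.mem_erase.1 h).2),
    Finset.card_erase_of_mem (opener_mem_UU hP1 hP2 hb)]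
  have := Finset.card_pos.2 ⟨b, opener_mem_UU hP1 hP2 hb⟩
  omega

include hP1 in
lemma card_UU_succ_nrend {t : ℕ} (ht : 1 ≤ t) (h : ∀ p ∈ P, p.2 ≠ t) :
    (UU P (t + 1)).card = (UU P t).card + 1 := by
  rw [UU_succ_nrend hP1 ht h, Finset.card_insert_of_notMem (not_mem_UU_self P t)]

end diagram

noncomputable def Phi (n : ℕ) (P : Finset (ℕ × ℕ)) : ℕ → ℕ :=
  fun i => if i < n then rk (UU P (i + 1)) (openerAt P (i + 1)) else 0

lemma Phi_ge {n : ℕ} {P : Finset (ℕ × ℕ)} {i : ℕ} (h : n ≤ i) : Phi n P i = 0 := by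
  rw [Phi, if_neg (by omega)]

lemma lmax_succ (x : ℕ → ℕ) (i : ℕ) : lmax x (i + 1) = max (lmax x i) (x i) := by
  rw [lmax, Finset.range_add_one, Finset.sup_insert, lmax]
  exact max_comm _ _

lemma lmax_one (x : ℕ → ℕ) : lmax x 1 = x 0 := by
  rw [lmax]
  simp

section diagram2
variable {n : ℕ} {P : Finset (ℕ × ℕ)}
  (hP1 : ∀ p ∈ P, 1 ≤ p.1 ∧ p.1 < p.2 ∧ p.2 ≤ n)
  (hP2 : ∀ p ∈ P, ∀ q ∈ P, p ≠ q → p.1 ≠ q.1 ∧ p.2 ≠ q.2)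

include hP2 in
lemma phi_rend {b i : ℕ} (hi : i < n) (hb : (b, i + 1) ∈ P) :
    Phi n P i = rk (UU P (i + 1)) b := by
  rw [Phi, if_pos hi, openerAt_eq hP2 hb]

lemma phi_nrend {i : ℕ} (hi : i < n) (h : ∀ p ∈ P, p.2 ≠ i + 1) :
    Phi n P i = (UU P (i + 1)).card := by
  rw [Phi, if_pos hi, openerAt_eq_self h]
  exact rk_eq_card_of_forall_lt UU_subset_lt

include hP1 in
lemma no_rend_one : ∀ p ∈ P, p.2 ≠ 1 := by
  intro p hp
  have := hP1 p hp
  omega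

include hP1 in
lemma phi_zero (hn : 0 < n) : Phi n P 0 = 0 := by
  rw [phi_nrend hn (no_rend_one hP1), UU_one, Finset.card_empty]

include hP1 hP2 in
lemma card_UU_lmax (hn : 0 < n) :
    ∀ i, 1 ≤ i → i ≤ n → lmax (Phi n P) i + 1 = (UU P (i + 1)).card := by
  intro i
  induction i with
  | zero => omega
  | succ j ih =>
    intro _ hj
    rcases Nat.eq_zero_or_pos j with rfl | hj1
    · rw [lmax_one, phi_zero hP1 hn,
        card_UU_succ_nrend hP1 (le_refl 1) (no_rend_one hP1), UU_one]
      simp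
    · have hIH := ih hj1 (by omega)
      have hjn : j < n := by omega
      rw [lmax_succ]
      by_cases h : ∃ p ∈ P, p.2 = j + 1
      · obtain ⟨p, hp, hp2⟩ := h
        have hb : (p.1, j + 1) ∈ P := by rwa [← hp2, Prod.mk.eta]
        have hxj : Phi n P j = rk (UU P (j + 1)) p.1 := phi_rend hP2 hjn hb
        have hlt : Phi n P j < (UU P (j + 1)).card := by
          rw [hxj]; exact rk_lt_card (opener_mem_UU hP1 hP2 hb)
        have hle : Phi n P j ≤ lmax (Phi n P) j := by omega
        rw [max_eq_left hle, card_UU_succ_rend hP1 hP2 hb, hIH]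
      · push_neg at h
        have hxj : Phi n P j = (UU P (j + 1)).card := phi_nrend hjn h
        have hgt : lmax (Phi n P) j < Phi n P j := by omega
        rw [max_eq_right (le_of_lt hgt), card_UU_succ_nrend hP1 (by omega) h]
        omega

include hP1 hP2 in
lemma phi_le_lmax_succ (hn : 0 < n) {i : ℕ} (h1 : 1 ≤ i) (h2 : i < n) :
    Phi n P i ≤ lmax (Phi n P) i + 1 := by
  have hL := card_UU_lmax hP1 hP2 hn i h1 (by omega)
  by_cases h : ∃ p ∈ P, p.2 = i + 1
  · obtain ⟨p, hp, hp2⟩ := h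
    have hb : (p.1, i + 1) ∈ P := by rwa [← hp2, Prod.mk.eta]
    have := rk_lt_card (opener_mem_UU hP1 hP2 hb)
    rw [phi_rend hP2 h2 hb]
    omega
  · push_neg at h
    rw [phi_nrend h2 h]
    omega

include hP1 hP2 in
lemma phi_lt_iff (hn : 0 < n) {i : ℕ} (h1 : 1 ≤ i) (h2 : i < n) :
    (lmax (Phi n P) i < Phi n P i ↔ ∀ p ∈ P, p.2 ≠ i + 1) := by
  have hL := card_UU_lmax hP1 hP2 hn i h1 (by omega)
  constructor
  · intro hlt p hp hp2
    have hb : (p.1, i + 1) ∈ P := by rwa [← hp2, Prod.mk.eta]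
    have := rk_lt_card (opener_mem_UU hP1 hP2 hb)
    rw [phi_rend hP2 h2 hb] at hlt
    omega
  · intro h
    rw [phi_nrend h2 h]
    omega

end diagram2

section main
variable {n k : ℕ}

lemma mapsTo (hn : 1 ≤ n) (hk : k ≤ n - 1) {P : Finset (ℕ × ℕ)} (hP : P ∈ CTSet n k) :
    Phi n P ∈ SeqSet n k := by
  classical
  obtain ⟨⟨hP1, hP2⟩, hcard, hcross⟩ := hP
  refine ⟨fun i hi => Phi_ge hi, phi_zero hP1 hn, ?_, ?_, ?_⟩
  · intro i h1 h2
    exact phi_le_lmax_succ hP1 hP2 hn h1 h2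
  · -- descent condition
    intro i h1 h2 hlt
    obtain ⟨j, rfl⟩ : ∃ j, i = j + 1 := ⟨i - 1, by omega⟩
    simp only [Nat.add_sub_cancel]
    -- x (j+1) < lmax x (j+1), so vertex j+2 is a right endpoint
    have hex : ∃ p ∈ P, p.2 = j + 2 := by
      by_contra hcon
      push_neg at hcon
      have := (phi_lt_iff hP1 hP2 hn (by omega) h2).2 hcon
      omega
    obtain ⟨p, hp, hp2⟩ := hex
    have hb : (p.1, j + 2) ∈ P := by rwa [← hp2, Prod.mk.eta]
    set b := p.1 with hbdef
    have hxj1 : Phi n P (j + 1) = rk (UU P (j + 2)) b := phi_rend hP2 h2 hb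
    have hL : lmax (Phi n P) (j + 1) + 1 = (UU P (j + 2)).card :=
      card_UU_lmax hP1 hP2 hn (j + 1) (by omega) (by omega)
    -- j ≥ 1, since lmax x 1 = 0
    have hj1 : 1 ≤ j := by
      by_contra hcon
      have hj0 : j = 0 := by omega
      subst hj0
      simp only [Nat.zero_add] at hlt
      rw [lmax_one, phi_zero hP1 hn] at hlt
      omega
    by_cases h' : ∃ q ∈ P, q.2 = j + 1
    · obtain ⟨q, hq, hq2⟩ := h'
      have ha : (q.1, j + 1) ∈ P := by rwa [← hq2, Prod.mk.eta]
      set a := q.1 with hadef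
      have hxj : Phi n P j = rk (UU P (j + 1)) a := phi_rend hP2 (by omega) ha
      -- no right crossing between (a, j+1) and (b, j+2)
      have hnc : ¬(a < b ∧ b < j + 1) := by
        intro ⟨hab, hbj⟩
        exact hcross ⟨(a, j + 1), ha, (b, j + 2), hb, hab, hbj, by omega, rfl⟩
      by_cases hbtop : b = j + 1
      · -- b = j+1 is the top of UU P (j+2), so x (j+1) = lmax, contradiction
        exfalso
        have hmem : j + 1 ∈ UU P (j + 2) := by
          refine mem_UU.2 ⟨⟨by omega, by omega⟩, fun p' hp' hp1' => ?_⟩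
          have := (hP1 p' hp').2.1
          omega
        have := rk_top hmem (fun v hv => by have := UU_subset_lt v hv; omega)
        rw [hxj1, hbtop] at hlt
        omega
      · -- b < a
        have hab : b < a := by
          have hba := (hP2 _ hb _ ha (by simp)).1
          simp only at hba
          by_contra hcon
          push_neg at hcon
          have h3 := (hP1 _ hb).2.1
          simp only at h3
          have : a < b := by omega
          have : b < j + 1 := by
            rcases Nat.lt_or_ge b (j + 1) with h4 | h4
            · exact h4
            · exfalso; exact hbtop (by omega)
          exact hnc ⟨‹a < b›, this⟩
        have haj : a < j + 1 := (hP1 _ ha).2.1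
        -- b ∈ UU P (j+1)
        have hbU : b ∈ UU P (j + 1) := by
          refine mem_UU.2 ⟨⟨(hP1 _ hb).1, by omega⟩, fun p' hp' hp1' => ?_⟩
          have hbp : (b, p'.2) ∈ P := by rwa [← hp1', Prod.mk.eta]
          have := lend_unique hP2 hbp hb
          omega
        -- filter agreement
        have hfil : (UU P (j + 2)).filter (· < b) = (UU P (j + 1)).filter (· < b) := by
          rw [UU_succ_rend hP1 hP2 ha]
          ext v
          simp only [Finset.mem_filter, Finset.mem_insert, Finset.mem_erase]
          constructor
          · rintro ⟨(rfl | ⟨hva, hv⟩), hvb⟩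
            · omega
            · exact ⟨hv, hvb⟩
          · rintro ⟨hv, hvb⟩
            exact ⟨Or.inr ⟨by omega, hv⟩, hvb⟩
        have : rk (UU P (j + 2)) b = rk (UU P (j + 1)) b := by
          rw [rk, rk, hfil]
        rw [hxj1, this, hxj]
        exact rk_lt_rk hbU hab
    · -- vertex j+1 is not a right endpoint: x j = lmax x (j+1) > x (j+1)
      push_neg at h'
      have hxj : Phi n P j = (UU P (j + 1)).card := phi_nrend (by omega) h'
      have hstep : (UU P (j + 2)).card = (UU P (j + 1)).card + 1 :=
        card_UU_succ_nrend hP1 (by omega) h'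
      omega
  · -- count of left-to-right maxima
    have hsplit := Finset.card_filter_add_card_filter_not
      (s := Finset.range n) (p := fun i => i = 0 ∨ lmax (Phi n P) i < Phi n P i)
    have hT : (Finset.range n).filter (fun i => ¬(i = 0 ∨ lmax (Phi n P) i < Phi n P i)) =
        P.image (fun p => p.2 - 1) := by
      ext i
      simp only [Finset.mem_filter, Finset.mem_range, Finset.mem_image]
      constructor
      · rintro ⟨hin, hcon⟩
        push_neg at hcon
        obtain ⟨hi0, hile⟩ := hcon
        have h1 : 1 ≤ i := by omega
        have hex : ∃ p ∈ P, p.2 = i + 1 := by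
          by_contra hcon2
          push_neg at hcon2
          have := (phi_lt_iff hP1 hP2 hn h1 hin).2 hcon2
          omega
        obtain ⟨p, hp, hp2⟩ := hex
        exact ⟨p, hp, by omega⟩
      · rintro ⟨p, hp, rfl⟩
        obtain ⟨ha1, ha2, ha3⟩ := hP1 _ hp
        have h1 : 1 ≤ p.2 - 1 := by omega
        have h2 : p.2 - 1 < n := by omega
        refine ⟨h2, ?_⟩
        push_neg
        refine ⟨by omega, ?_⟩
        by_contra hcon
        push_neg at hcon
        have h3 := (phi_lt_iff hP1 hP2 hn h1 h2).1 hcon p hp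
        omega
    have himgcard : (P.image (fun p => p.2 - 1)).card = k := by
      rw [Finset.card_image_of_injOn, hcard]
      intro p hp q hq hpq
      simp only at hpq
      by_contra hne
      have h1 := (hP1 _ hp).2.1
      have h2 := (hP1 _ hq).2.1
      have h3 := (hP2 _ hp _ hq hne).2
      omega
    rw [hT, himgcard] at hsplit
    have := Finset.card_range n
    omega

lemma UU_congr {P Q : Finset (ℕ × ℕ)} {t : ℕ}
    (h : ∀ p : ℕ × ℕ, p.2 < t → (p ∈ P ↔ p ∈ Q)) : UU P t = UU Q t := by
  ext v
  simp only [mem_UU]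
  constructor
  · rintro ⟨hv, hall⟩
    refine ⟨hv, fun q hq hq1 => ?_⟩
    by_contra hcon
    push_neg at hcon
    exact absurd (hall q ((h q hcon).2 hq) hq1) (by omega)
  · rintro ⟨hv, hall⟩
    refine ⟨hv, fun q hq hq1 => ?_⟩
    by_contra hcon
    push_neg at hcon
    exact absurd (hall q ((h q hcon).1 hq) hq1) (by omega)

lemma rend_transfer {n t b : ℕ} {P Q : Finset (ℕ × ℕ)}
    (hP1 : ∀ p ∈ P, 1 ≤ p.1 ∧ p.1 < p.2 ∧ p.2 ≤ n)
    (hP2 : ∀ p ∈ P, ∀ q ∈ P, p ≠ q → p.1 ≠ q.1 ∧ p.2 ≠ q.2)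
    (hQ1 : ∀ p ∈ Q, 1 ≤ p.1 ∧ p.1 < p.2 ∧ p.2 ≤ n)
    (hQ2 : ∀ p ∈ Q, ∀ q ∈ Q, p ≠ q → p.1 ≠ q.1 ∧ p.2 ≠ q.2)
    (hphi : Phi n P = Phi n Q) (hUU : UU P (t + 1) = UU Q (t + 1))
    (ht : t < n) (hb : (b, t + 1) ∈ P) : (b, t + 1) ∈ Q := by
  have hbU : b ∈ UU P (t + 1) := opener_mem_UU hP1 hP2 hb
  have hxP : Phi n P t = rk (UU P (t + 1)) b := phi_rend hP2 ht hb
  have hex : ∃ q ∈ Q, q.2 = t + 1 := by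
    by_contra hcon
    push_neg at hcon
    have hxQ : Phi n Q t = (UU Q (t + 1)).card := phi_nrend ht hcon
    have hlt := rk_lt_card hbU
    rw [← hUU] at hxQ
    rw [← hphi, hxP] at hxQ
    omega
  obtain ⟨q, hq, hq2⟩ := hex
  have hc : (q.1, t + 1) ∈ Q := by rwa [← hq2, Prod.mk.eta]
  have hcU : q.1 ∈ UU P (t + 1) := by rw [hUU]; exact opener_mem_UU hQ1 hQ2 hc
  have hxQ : Phi n Q t = rk (UU Q (t + 1)) q.1 := phi_rend hQ2 ht hc
  rw [← hphi, hxP, ← hUU] at hxQ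
  have : b = q.1 := rk_inj hbU hcU hxQ
  rwa [this]

lemma injOn (hn : 1 ≤ n) : Set.InjOn (Phi n) (CTSet n k) := by
  rintro P ⟨⟨hP1, hP2⟩, hcardP, -⟩ Q ⟨⟨hQ1, hQ2⟩, hcardQ, -⟩ hphi
  have key : ∀ t, t ≤ n → ∀ p : ℕ × ℕ, p.2 ≤ t → (p ∈ P ↔ p ∈ Q) := by
    intro t
    induction t with
    | zero =>
      intro _ p hp2
      constructor
      · intro h; have := hP1 p h; omega
      · intro h; have := hQ1 p h; omega
    | succ t ih =>
      intro ht p hp2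
      rcases Nat.lt_or_ge p.2 (t + 1) with hlt | hge
      · exact ih (by omega) p (by omega)
      · have hp2' : p.2 = t + 1 := by omega
        have hUU : UU P (t + 1) = UU Q (t + 1) :=
          UU_congr (fun q hq => ih (by omega) q (by omega))
        constructor
        · intro h
          have hb : (p.1, t + 1) ∈ P := by rwa [← hp2', Prod.mk.eta]
          have := rend_transfer hP1 hP2 hQ1 hQ2 hphi hUU (by omega) hb
          rwa [← hp2', Prod.mk.eta] at this
        · intro h
          have hb : (p.1, t + 1) ∈ Q := by rwa [← hp2', Prod.mk.eta]
          have := rend_transfer hQ1 hQ2 hP1 hP2 hphi.symm hUU.symm (by omega) hb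
          rwa [← hp2', Prod.mk.eta] at this
  ext p
  rcases le_or_gt p.2 n with h | h
  · exact key n (le_refl n) p h
  · constructor
    · intro hp; have := hP1 p hp; omega
    · intro hp; have := hQ1 p hp; omega

end main

noncomputable def build (x : ℕ → ℕ) : ℕ → Finset (ℕ × ℕ)
  | 0 => ∅
  | t + 1 =>
    if 1 ≤ t ∧ x t ≤ lmax x t then
      insert (fnth (UU (build x t) (t + 1)) (x t), t + 1) (build x t)
    else build x t

lemma build_zero (x : ℕ → ℕ) : build x 0 = ∅ := rfl

lemma build_succ (x : ℕ → ℕ) (t : ℕ) :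
    build x (t + 1) =
      if 1 ≤ t ∧ x t ≤ lmax x t then
        insert (fnth (UU (build x t) (t + 1)) (x t), t + 1) (build x t)
      else build x t := rfl

lemma build_mono (x : ℕ → ℕ) {s t : ℕ} (h : s ≤ t) : build x s ⊆ build x t := by
  induction t with
  | zero => have : s = 0 := by omega
            rw [this]
  | succ j ih =>
    rcases Nat.lt_or_ge s (j + 1) with h' | h'
    · refine subset_trans (ih (by omega)) ?_
      rw [build_succ]
      split
      · exact Finset.subset_insert _ _
      · exact subset_refl _
    · have : s = j + 1 := by omega
      rw [this]

/-- invariant bundle for the construction. -/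
def BuildInv (n : ℕ) (x : ℕ → ℕ) (t : ℕ) : Prop :=
  (∀ p ∈ build x t, 1 ≤ p.1 ∧ p.1 < p.2 ∧ p.2 ≤ t) ∧
  (∀ p ∈ build x t, ∀ q ∈ build x t, p ≠ q → p.1 ≠ q.1 ∧ p.2 ≠ q.2) ∧
  ¬ HasRightCrossing (build x t) ∧
  (UU (build x t) (t + 1)).card = lmax x t + 1 ∧
  (build x t).card
    = ((Finset.range t).filter (fun i => ¬(i = 0 ∨ lmax x i < x i))).card ∧
  (∀ a, (a, t) ∈ build x t →
    a ∈ UU (build x t) t ∧ rk (UU (build x t) t) a = x (t - 1))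

section main2
variable {n k : ℕ} {x : ℕ → ℕ}

lemma UU_insert_rend {B : Finset (ℕ × ℕ)} {b t : ℕ} :
    UU (insert (b, t) B) t = UU B t := by
  apply UU_congr
  intro p hp
  simp only [Finset.mem_insert]
  constructor
  · rintro (rfl | h)
    · simp at hp
    · exact h
  · exact Or.inr

lemma build_inv (hx : x ∈ SeqSet n k) (hn : 1 ≤ n) :
    ∀ t, 1 ≤ t → t ≤ n → BuildInv n x t := by
  obtain ⟨hx0, hx00, hxb, hxd, hxc⟩ := hx
  intro t
  induction t with
  | zero => omega
  | succ j ih =>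
    intro _ hjn
    rcases Nat.eq_zero_or_pos j with rfl | hj1
    · -- base case t = 1
      have hb1 : build x 1 = ∅ := by
        rw [build_succ, if_neg (by omega), build_zero]
      refine ⟨?_, ?_, ?_, ?_, ?_, ?_⟩ <;> rw [hb1]
      · intro p hp; simp at hp
      · intro p hp; simp at hp
      · rintro ⟨p, hp, -⟩; simp at hp
      · have : UU (∅ : Finset (ℕ × ℕ)) 2 = {1} := by
          ext v; simp [mem_UU]; omega
        rw [this, lmax_one, hx00]
        simp
      · have : (Finset.range 1).filter (fun i => ¬(i = 0 ∨ lmax x i < x i)) = ∅ := by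
          rw [Finset.range_one, Finset.filter_singleton, if_neg (by simp)]
        rw [this]
        simp
      · intro a ha; simp at ha
    · -- inductive step, j ≥ 1, j + 1 ≤ n
      obtain ⟨i1, i2, i3, i4, i5, i6⟩ := ih hj1 (by omega)
      have hjn' : j < n := by omega
      set B := build x j with hB
      by_cases hadd : x j ≤ lmax x j
      · -- an arc is added at stage j+1
        set b := fnth (UU B (j + 1)) (x j) with hbdef
        have hBs : build x (j + 1) = insert (b, j + 1) B := by
          rw [build_succ, if_pos ⟨hj1, hadd⟩]
        have hxlt : x j < (UU B (j + 1)).card := by omega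
        have hbU : b ∈ UU B (j + 1) := fnth_mem hxlt
        have hbrk : rk (UU B (j + 1)) b = x j := rk_fnth hxlt
        obtain ⟨⟨hb1, hblt⟩, hbun⟩ := mem_UU.1 hbU
        have hbnotl : ∀ p ∈ B, p.1 ≠ b := by
          intro p hp hcon
          have := hbun p hp hcon
          have := (i1 p hp).2.2
          omega
        have hUUeq : UU (build x (j + 1)) (j + 1) = UU B (j + 1) := by
          rw [hBs]; exact UU_insert_rend
        have hlm : lmax x (j + 1) = lmax x j := by
          rw [lmax_succ, max_eq_left hadd]
        -- diagram bounds
        have j1' : ∀ p ∈ build x (j + 1), 1 ≤ p.1 ∧ p.1 < p.2 ∧ p.2 ≤ j + 1 := by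
          rw [hBs]
          intro p hp
          rcases Finset.mem_insert.1 hp with rfl | hp'
          · exact ⟨hb1, by omega, le_refl _⟩
          · have := i1 p hp'
            omega
        -- distinctness
        have j2' : ∀ p ∈ build x (j + 1), ∀ q ∈ build x (j + 1), p ≠ q →
            p.1 ≠ q.1 ∧ p.2 ≠ q.2 := by
          rw [hBs]
          intro p hp q hq hne
          rcases Finset.mem_insert.1 hp with rfl | hp' <;>
            rcases Finset.mem_insert.1 hq with h | hq'
          · exact absurd h.symm hne
          · have h1 := hbnotl q hq'
            have h2 := (i1 q hq').2.2
            exact ⟨fun hc => h1 hc.symm, by show j + 1 ≠ q.2; omega⟩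
          · subst h
            have h1 := hbnotl p hp'
            have h2 := (i1 p hp').2.2
            exact ⟨h1, by show p.2 ≠ j + 1; omega⟩
          · exact i2 p hp' q hq' hne
        refine ⟨j1', j2', ?_, ?_, ?_, ?_⟩
        · -- no right crossing
          rw [hBs]
          rintro ⟨p, hp, q, hq, hc1, hc2, hc3, hc4⟩
          rcases Finset.mem_insert.1 hp with rfl | hp' <;>
            rcases Finset.mem_insert.1 hq with hq1 | hq'
          · rw [hq1] at hc1; simp at hc1
          · have := (i1 q hq').2.2
            simp at hc3 hc4
            omega
          · -- old arc p = (a, j), new arc q = (b, j+1)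
            subst hq1
            simp only at hc1 hc2 hc3 hc4
            have hpj : p.2 = j := by omega
            have hpa : (p.1, j) ∈ B := by rwa [← hpj, Prod.mk.eta]
            obtain ⟨haU, hark⟩ := i6 p.1 hpa
            -- x j < lmax x j, since b < j means b isn't the top
            have hxjlt : x j < lmax x j := by
              rcases Nat.lt_or_ge (x j) (lmax x j) with h | h
              · exact h
              · exfalso
                have hxeq : x j = lmax x j := by omega
                -- then b is the top element j of UU B (j+1)
                have hjU : j ∈ UU B (j + 1) := by
                  refine mem_UU.2 ⟨⟨by omega, by omega⟩, fun p' hp' hp1' => ?_⟩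
                  have := (i1 p' hp').2.2
                  have := (i1 p' hp').2.1
                  omega
                have := rk_top hjU (fun v hv => by have := UU_subset_lt v hv; omega)
                have hbj : b = j := by
                  apply rk_inj hbU hjU
                  omega
                omega
            have hdesc := hxd j hj1 hjn' hxjlt
            -- rk (UU B (j+1)) p.1 = rk (UU B j) p.1 = x (j-1)
            have hUs : UU B (j + 1) = insert j ((UU B j).erase p.1) :=
              UU_succ_rend i1 i2 hpa
            have haj : p.1 < j := by
              have := (i1 _ hpa).2.1
              simpa using this
            have hfila : (UU B (j + 1)).filter (· < p.1) = (UU B j).filter (· < p.1) := by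
              rw [hUs]
              ext v
              simp only [Finset.mem_filter, Finset.mem_insert, Finset.mem_erase]
              constructor
              · rintro ⟨(rfl | ⟨hva, hv⟩), hvb⟩
                · omega
                · exact ⟨hv, hvb⟩
              · rintro ⟨hv, hvb⟩
                exact ⟨Or.inr ⟨by omega, hv⟩, hvb⟩
            have hrka : rk (UU B (j + 1)) p.1 = x (j - 1) := by
              rw [rk, hfila, ← rk, hark]
            -- but rk b < rk p.1 is impossible since p.1 < b
            have hmono : rk (UU B (j + 1)) p.1 ≤ rk (UU B (j + 1)) b := by
              apply Finset.card_le_card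
              intro v hv
              simp only [Finset.mem_filter] at hv ⊢
              exact ⟨hv.1, by omega⟩
            omega
          · exact i3 ⟨p, hp', q, hq', hc1, hc2, hc3, hc4⟩
        · -- card of UU at j+2
          have := card_UU_succ_rend (n := j + 1) j1' j2'
            (b := b) (t := j + 1) (by rw [hBs]; exact Finset.mem_insert_self _ _)
          rw [this, hUUeq, i4, hlm]
        · -- cardinality
          rw [hBs, Finset.card_insert_of_notMem, i5]
          · have : (Finset.range (j + 1)).filter (fun i => ¬(i = 0 ∨ lmax x i < x i)) =
                insert j ((Finset.range j).filter (fun i => ¬(i = 0 ∨ lmax x i < x i))) := by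
              rw [Finset.range_add_one, Finset.filter_insert, if_pos]
              push_neg
              exact ⟨by omega, by omega⟩
            rw [this, Finset.card_insert_of_notMem]
            intro hcon
            simp at hcon
          · intro hcon
            have := (i1 _ hcon).2.2
            simp at this
        · -- clause 6
          intro a ha
          rw [hBs] at ha
          rcases Finset.mem_insert.1 ha with ha' | ha'
          · have : a = b := congrArg Prod.fst ha'
            subst this
            rw [hUUeq]
            simpa using ⟨hbU, hbrk⟩
          · exfalso
            have := (i1 _ ha').2.2
            simp at this
      · -- no arc is added: x j = lmax x j + 1
        have hBs : build x (j + 1) = B := by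
          rw [build_succ, if_neg (by omega)]
        have hxj : x j = lmax x j + 1 := by
          have := hxb j hj1 hjn'
          omega
        have hlm : lmax x (j + 1) = x j := by
          rw [lmax_succ, max_eq_right (by omega)]
        have hnrend : ∀ p ∈ B, p.2 ≠ j + 1 := by
          intro p hp
          have := (i1 p hp).2.2
          omega
        refine ⟨?_, ?_, ?_, ?_, ?_, ?_⟩ <;> rw [hBs]
        · intro p hp
          have := i1 p hp
          omega
        · exact i2
        · exact i3
        · rw [card_UU_succ_nrend (n := j) i1 (by omega) hnrend, i4, hlm, hxj]
        · rw [i5]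
          congr 1
          rw [Finset.range_add_one, Finset.filter_insert,
            if_neg (by push_neg; exact Or.inr (by omega))]
        · intro a ha
          have := (i1 _ ha).2.2
          simp at this

lemma build_early {s t : ℕ} (h : s ≤ t) :
    ∀ p ∈ build x t, p.2 ≤ s → p ∈ build x s := by
  induction t with
  | zero => intro p hp; rw [build_zero] at hp; simp at hp
  | succ j ih =>
    intro p hp hps
    rcases Nat.lt_or_ge s (j + 1) with h' | h'
    · rw [build_succ] at hp
      by_cases hc : 1 ≤ j ∧ x j ≤ lmax x j
      · rw [if_pos hc] at hp
        rcases Finset.mem_insert.1 hp with rfl | hp'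
        · simp at hps; omega
        · exact ih (by omega) p hp' hps
      · rw [if_neg hc] at hp
        exact ih (by omega) p hp hps
    · have : s = j + 1 := by omega
      subst this
      exact hp

lemma surjOn (hn : 1 ≤ n) (hk : k ≤ n - 1) (hx : x ∈ SeqSet n k) :
    ∃ P ∈ CTSet n k, Phi n P = x := by
  classical
  obtain ⟨hx0, hx00, hxb, hxd, hxc⟩ := hx
  obtain ⟨i1, i2, i3, i4, i5, i6⟩ := build_inv ⟨hx0, hx00, hxb, hxd, hxc⟩ hn n hn (le_refl n)
  set P := build x n with hP
  have hP1 : ∀ p ∈ P, 1 ≤ p.1 ∧ p.1 < p.2 ∧ p.2 ≤ n := i1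
  have hP2 := i2
  -- cardinality
  have hcard : P.card = k := by
    rw [i5]
    have hsplit := Finset.card_filter_add_card_filter_not
      (s := Finset.range n) (p := fun i => i = 0 ∨ lmax x i < x i)
    rw [hxc] at hsplit
    have := Finset.card_range n
    omega
  -- key: UU of P at time t+1 equals UU of build x t for t ≤ n
  have hUUkey : ∀ t, t ≤ n → UU P (t + 1) = UU (build x t) (t + 1) := by
    intro t ht
    apply UU_congr
    intro p hp
    constructor
    · intro h; exact build_early ht p h (by omega)
    · intro h; exact build_mono x ht h
  -- rend characterization
  have hrend : ∀ t, t < n → ∀ c, (c, t + 1) ∈ P → (c, t + 1) ∈ build x (t + 1) := by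
    intro t ht c hc
    exact build_early (by omega) _ hc (by simp)
  have hphi : Phi n P = x := by
    funext i
    rcases Nat.lt_or_ge i n with hin | hin
    · rcases Nat.eq_zero_or_pos i with rfl | hi1
      · rw [phi_zero hP1 hn, hx00]
      · by_cases hc : x i ≤ lmax x i
        · -- arc (b, i+1) was added at stage i+1
          have hBs : build x (i + 1) =
              insert (fnth (UU (build x i) (i + 1)) (x i), i + 1) (build x i) := by
            rw [build_succ, if_pos ⟨hi1, hc⟩]
          set b := fnth (UU (build x i) (i + 1)) (x i) with hbdef
          have hbP : (b, i + 1) ∈ P := by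
            apply build_mono x (show i + 1 ≤ n by omega)
            rw [hBs]
            exact Finset.mem_insert_self _ _
          obtain ⟨i1', _, _, i4', _, _⟩ := build_inv ⟨hx0, hx00, hxb, hxd, hxc⟩ hn i hi1 (by omega)
          have hxlt : x i < (UU (build x i) (i + 1)).card := by
            rw [i4']; omega
          rw [phi_rend hP2 hin hbP, hUUkey i (by omega), rk_fnth hxlt]
        · -- no arc ends at i+1
          have hnr : ∀ p ∈ P, p.2 ≠ i + 1 := by
            intro p hp hcon
            have hp' : (p.1, i + 1) ∈ P := by rwa [← hcon, Prod.mk.eta]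
            have := hrend i (by omega) p.1 hp'
            rw [build_succ, if_neg (by omega)] at this
            obtain ⟨j1, -, -, -, -, -⟩ := build_inv ⟨hx0, hx00, hxb, hxd, hxc⟩ hn i hi1 (by omega)
            have := (j1 _ this).2.2
            simp at this
          obtain ⟨-, -, -, i4', -, -⟩ := build_inv ⟨hx0, hx00, hxb, hxd, hxc⟩ hn i hi1 (by omega)
          rw [phi_nrend hin hnr, hUUkey i (by omega), i4']
          have := hxb i hi1 hin
          omega
    · rw [Phi_ge hin, hx0 i hin]
  exact ⟨P, ⟨⟨hP1, hP2⟩, hcard, i3⟩, hphi⟩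

end main2
/-- `CT(n,k) = S(n,k)` as cardinalities. -/
theorem stmt7 (n k : ℕ) (hn : 1 ≤ n) (hk : k ≤ n - 1) :
    (CTSet n k).ncard = (SeqSet n k).ncard := by
  have himg : SeqSet n k = Phi n '' (CTSet n k) := by
    ext x
    constructor
    · intro hx
      obtain ⟨P, hP, hPx⟩ := surjOn hn hk hx
      exact ⟨P, hP, hPx⟩
    · rintro ⟨P, hP, rfl⟩
      exact mapsTo hn hk hP
  rw [himg, Set.ncard_image_of_injOn (injOn hn)]
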